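/- Let d ≥ 2 and κ > 0. Set φ(r) = r√(1+κ²r²) for r > 0 and h(r) = (φ'(r)/r)^{d-1} φ''(r). Then h(r) > 0 for all r > 0, and there exists a constant C > 0, depending only on d (in particular independent of κ and r), such that for all r > 0, 0 ≤ h(r)^{-1/2} ≤ C κ^{-d/2} (κr/√(1+κ²r²))^{(d-2)/2}. -/

import Mathlib

noncomputable section

/-- The phase `φ(r) = r √(1 + κ² r²)`. -/
def phiK (κ : ℝ) : ℝ → ℝ := fun r => r * Real.sqrt (1 + κ ^ 2 * r ^ 2)

/-- `h(r) = (φ'(r)/r)^{d-1} φ''(r)`, the determinant of the Hessian of the radial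
function `ξ ↦ φ(|ξ|)` on `ℝ^d`, for `φ = phiK κ`. -/
def hK (d : ℕ) (κ : ℝ) (r : ℝ) : ℝ :=
  (deriv (phiK κ) r / r) ^ (d - 1) * deriv (deriv (phiK κ)) r

variable {κ r : ℝ}

lemma hasDerivAt_sqrtK (hκ : 0 < κ) (r : ℝ) :
    HasDerivAt (fun r => Real.sqrt (1 + κ ^ 2 * r ^ 2))
      (κ ^ 2 * r / Real.sqrt (1 + κ ^ 2 * r ^ 2)) r := by
  have hpos : 0 < 1 + κ ^ 2 * r ^ 2 := by positivity
  have h1 : HasDerivAt (fun r : ℝ => 1 + κ ^ 2 * r ^ 2) (κ ^ 2 * (2 * r)) r := by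
    simpa using (((hasDerivAt_pow 2 r).const_mul (κ ^ 2)).const_add 1)
  have h2 := (Real.hasDerivAt_sqrt hpos.ne').comp r h1
  have hs : 0 < Real.sqrt (1 + κ ^ 2 * r ^ 2) := Real.sqrt_pos.2 hpos
  refine h2.congr_deriv ?_
  field_simp

lemma deriv_phiK (hκ : 0 < κ) (r : ℝ) :
    HasDerivAt (phiK κ)
      (Real.sqrt (1 + κ ^ 2 * r ^ 2) + κ ^ 2 * r ^ 2 / Real.sqrt (1 + κ ^ 2 * r ^ 2)) r := by
  have h := (hasDerivAt_id r).mul (hasDerivAt_sqrtK hκ r)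
  refine h.congr_deriv ?_
  simp [mul_div_assoc]
  ring

lemma deriv_phiK_eq (hκ : 0 < κ) :
    deriv (phiK κ) = fun r =>
      Real.sqrt (1 + κ ^ 2 * r ^ 2) + κ ^ 2 * r ^ 2 / Real.sqrt (1 + κ ^ 2 * r ^ 2) :=
  funext fun r => (deriv_phiK hκ r).deriv

lemma deriv2_phiK (hκ : 0 < κ) (r : ℝ) :
    HasDerivAt (deriv (phiK κ))
      (κ ^ 2 * r * (3 + 2 * κ ^ 2 * r ^ 2) / Real.sqrt (1 + κ ^ 2 * r ^ 2) ^ 3) r := by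
  rw [deriv_phiK_eq hκ]
  have hpos : 0 < 1 + κ ^ 2 * r ^ 2 := by positivity
  have hs : 0 < Real.sqrt (1 + κ ^ 2 * r ^ 2) := Real.sqrt_pos.2 hpos
  have hs2 : Real.sqrt (1 + κ ^ 2 * r ^ 2) ^ 2 = 1 + κ ^ 2 * r ^ 2 := Real.sq_sqrt hpos.le
  have h1 : HasDerivAt (fun r : ℝ => κ ^ 2 * r ^ 2) (κ ^ 2 * (2 * r)) r := by
    simpa using ((hasDerivAt_pow 2 r).const_mul (κ ^ 2))
  have h2 := (hasDerivAt_sqrtK hκ r).add (h1.div (hasDerivAt_sqrtK hκ r) hs.ne')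
  refine h2.congr_deriv ?_
  field_simp
  set s := Real.sqrt (1 + κ ^ 2 * r ^ 2) with hsdef
  set p := 1 + κ ^ 2 * r ^ 2 with hpdef
  linear_combination (3 * r) * hs2

lemma hK_eq {d : ℕ} (hd : 2 ≤ d) (hκ : 0 < κ) (hr : 0 < r) :
    hK d κ r = κ ^ 2 * (1 + 2 * κ ^ 2 * r ^ 2) ^ (d - 1) * (3 + 2 * κ ^ 2 * r ^ 2) /
      (r ^ (d - 2) * Real.sqrt (1 + κ ^ 2 * r ^ 2) ^ (d + 2)) := by
  have hpos : 0 < 1 + κ ^ 2 * r ^ 2 := by positivity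
  have hs : 0 < Real.sqrt (1 + κ ^ 2 * r ^ 2) := Real.sqrt_pos.2 hpos
  have hs2 : Real.sqrt (1 + κ ^ 2 * r ^ 2) ^ 2 = 1 + κ ^ 2 * r ^ 2 := Real.sq_sqrt hpos.le
  obtain ⟨k, rfl⟩ : ∃ k, d = 2 + k := ⟨d - 2, by omega⟩
  unfold hK
  rw [(deriv2_phiK hκ r).deriv, deriv_phiK_eq hκ]
  have hbase : (Real.sqrt (1 + κ ^ 2 * r ^ 2) + κ ^ 2 * r ^ 2 / Real.sqrt (1 + κ ^ 2 * r ^ 2)) / r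
      = (1 + 2 * κ ^ 2 * r ^ 2) / (Real.sqrt (1 + κ ^ 2 * r ^ 2) * r) := by
    field_simp
    rw [hs2]; ring
  rw [hbase]
  have h1 : 2 + k - 1 = k + 1 := by omega
  have h2 : 2 + k - 2 = k := by omega
  rw [h1, h2]
  rw [div_pow, div_mul_div_comm, div_eq_div_iff (by positivity) (by positivity)]
  ring

/-- Let `d ≥ 2`. For `φ(r) = r√(1+κ²r²)` and `h(r) = (φ'(r)/r)^{d-1} φ''(r)`, one has
`h(r) > 0` for all `r > 0`, and there is a constant `C > 0` depending only on `d`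
(independent of `κ` and `r`) such that
`0 ≤ h(r)^{-1/2} ≤ C κ^{-d/2} (κr/√(1+κ²r²))^{(d-2)/2}` for all `κ > 0`, `r > 0`. -/
theorem hK_lower_bound (d : ℕ) (hd : 2 ≤ d) :
    ∃ C > 0, ∀ κ > 0, ∀ r > 0,
      0 < hK d κ r ∧
      0 ≤ (hK d κ r) ^ (-(1 : ℝ) / 2) ∧
      (hK d κ r) ^ (-(1 : ℝ) / 2) ≤
        C * κ ^ (-(d : ℝ) / 2) *
          (κ * r / Real.sqrt (1 + κ ^ 2 * r ^ 2)) ^ (((d : ℝ) - 2) / 2) := by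
  refine ⟨1, one_pos, fun κ hκ r hr => ?_⟩
  have hpos : 0 < 1 + κ ^ 2 * r ^ 2 := by positivity
  have hs : 0 < Real.sqrt (1 + κ ^ 2 * r ^ 2) := Real.sqrt_pos.2 hpos
  have hs2 : Real.sqrt (1 + κ ^ 2 * r ^ 2) ^ 2 = 1 + κ ^ 2 * r ^ 2 := Real.sq_sqrt hpos.le
  set s := Real.sqrt (1 + κ ^ 2 * r ^ 2) with hsdef
  have hh := hK_eq hd hκ hr
  have hHpos : 0 < hK d κ r := by
    rw [hh]
    have : (0:ℝ) < 1 + 2 * κ ^ 2 * r ^ 2 := by positivity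
    positivity
  refine ⟨hHpos, Real.rpow_nonneg hHpos.le _, ?_⟩
  set T : ℝ := κ ^ 2 * s ^ (d - 2) / r ^ (d - 2) with hTdef
  have hT : 0 < T := by positivity
  have hTle : T ≤ hK d κ r := by
    obtain ⟨k, rfl⟩ : ∃ k, d = 2 + k := ⟨d - 2, by omega⟩
    have e1 : 2 + k - 1 = k + 1 := by omega
    have e2 : 2 + k - 2 = k := by omega
    have e3 : 2 + k + 2 = k + 4 := by omega
    rw [hh, hTdef, e1, e2, e3, div_le_div_iff₀ (by positivity) (by positivity)]
    have hss : s ^ k * s ^ (k + 4) = (1 + κ ^ 2 * r ^ 2) ^ (k + 2) := by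
      rw [← pow_add, show k + (k + 4) = 2 * (k + 2) by ring, pow_mul, hs2]
    have hp : (1 + κ ^ 2 * r ^ 2) ^ (k + 2) ≤
        (1 + 2 * κ ^ 2 * r ^ 2) ^ (k + 1) * (3 + 2 * κ ^ 2 * r ^ 2) := by
      have h1 : (1 + κ ^ 2 * r ^ 2) ^ (k + 2) =
          (1 + κ ^ 2 * r ^ 2) ^ (k + 1) * (1 + κ ^ 2 * r ^ 2) := by ring
      rw [h1]
      have hu : (0:ℝ) ≤ κ ^ 2 * r ^ 2 := by positivity
      exact mul_le_mul (pow_le_pow_left₀ (by positivity) (by nlinarith) _)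
        (by nlinarith) (by positivity) (by positivity)
    calc κ ^ 2 * s ^ k * (r ^ k * s ^ (k + 4))
        = κ ^ 2 * r ^ k * ((1 + κ ^ 2 * r ^ 2) ^ (k + 2)) := by rw [← hss]; ring
      _ ≤ κ ^ 2 * r ^ k * ((1 + 2 * κ ^ 2 * r ^ 2) ^ (k + 1) * (3 + 2 * κ ^ 2 * r ^ 2)) := by
          have : (0:ℝ) ≤ κ ^ 2 * r ^ k := by positivity
          exact mul_le_mul_of_nonneg_left hp this
      _ = κ ^ 2 * (1 + 2 * κ ^ 2 * r ^ 2) ^ (k + 1) * (3 + 2 * κ ^ 2 * r ^ 2) * r ^ k := by ring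
  have step1 : (hK d κ r) ^ (-(1:ℝ)/2) ≤ T ^ (-(1:ℝ)/2) :=
    Real.rpow_le_rpow_of_nonpos hT hTle (by norm_num)
  refine step1.trans (le_of_eq ?_)
  have hqr : 0 < κ * r / s := by positivity
  have hL : 0 < T ^ (-(1:ℝ)/2) := Real.rpow_pos_of_pos hT _
  have hR : 0 < 1 * κ ^ (-(d:ℝ)/2) * (κ * r / s) ^ (((d:ℝ) - 2)/2) := by
    have := Real.rpow_pos_of_pos hκ (-(d:ℝ)/2)
    have := Real.rpow_pos_of_pos hqr (((d:ℝ) - 2)/2)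
    positivity
  rw [← Real.exp_log hL, ← Real.exp_log hR]
  congr 1
  rw [Real.log_rpow hT, hTdef, Real.log_div (by positivity) (by positivity),
    Real.log_mul (by positivity) (by positivity), Real.log_pow, Real.log_pow, Real.log_pow,
    one_mul, Real.log_mul (by positivity) (by positivity),
    Real.log_rpow hκ, Real.log_rpow hqr, Real.log_div (by positivity) hs.ne',
    Real.log_mul hκ.ne' hr.ne']
  have hc : ((d - 2 : ℕ) : ℝ) = (d : ℝ) - 2 := by
    push_cast [Nat.cast_sub hd]; ring
  rw [hc]
  ring
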